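/- Let 0 < α < 1, let F be α-SR, and let r > 0 be a monopoly price of F, i.e. φ(r) = 0. Then for every t ≥ r, ∫_t^∞ (1−F(v)) dv ≤ (1−F(t)) · ((1−α)t + αr)/α ≤ (1−F(t)) · t/α. -/

import Mathlib

open MeasureTheory Real Filter

/-- The virtual valuation function `φ(v) = v − (1 − F(v))/f(v)`. -/
noncomputable def virtualValue (F f : ℝ → ℝ) (v : ℝ) : ℝ := v - (1 - F v) / f v

/-- The hazard rate `h(v) = f(v)/(1 − F(v))`. -/
noncomputable def hazardRate (F f : ℝ → ℝ) (v : ℝ) : ℝ := f v / (1 - F v)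

/-- `F` is the CDF of a continuous distribution supported on `[0, ∞)`,
with density `f = F'` that is positive wherever `F < 1`. -/
structure IsCDF (F f : ℝ → ℝ) : Prop where
  zero : F 0 = 0
  mono : Monotone F
  le_one : ∀ v, F v ≤ 1
  tendsto_one : Tendsto F atTop (nhds 1)
  hasDeriv : ∀ v, 0 ≤ v → HasDerivAt F (f v) v
  f_pos : ∀ v, 0 ≤ v → F v < 1 → 0 < f v

/-- `F` is `α`-strongly regular: `φ(y) − φ(x) ≥ α (y − x)` for all `x < y` in the support. -/
def IsAlphaSR (α : ℝ) (F f : ℝ → ℝ) : Prop :=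
  ∀ x y, 0 ≤ x → x < y → F y < 1 →
    virtualValue F f y - virtualValue F f x ≥ α * (y - x)

/-- the derivative of a monotone function is nonnegative -/
lemma f_nonneg_of_monotone {F : ℝ → ℝ} {f : ℝ → ℝ} (hm : Monotone F) {v : ℝ}
    (hd : HasDerivAt F (f v) v) : 0 ≤ f v := by
  have h := hasDerivAt_iff_tendsto_slope.mp hd
  have h2 : Tendsto (slope F v) (nhdsWithin v (Set.Ioi v)) (nhds (f v)) :=
    h.mono_left (nhdsWithin_mono v (fun y hy => ne_of_gt hy))
  refine ge_of_tendsto h2 ?_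
  filter_upwards [self_mem_nhdsWithin] with y hy
  rw [slope_def_field]
  exact div_nonneg (sub_nonneg.2 (hm (le_of_lt hy))) (sub_nonneg.2 (le_of_lt hy))

theorem tail_integral_bound (α : ℝ) (F f : ℝ → ℝ)
    (hα0 : 0 < α) (hα1 : α < 1)
    (hcdf : IsCDF F f) (hSR : IsAlphaSR α F f)
    (r : ℝ) (hr : 0 < r) (hmon : virtualValue F f r = 0)
    (t : ℝ) (hrt : r ≤ t) :
    (∫ v in Set.Ioi t, (1 - F v)) ≤ (1 - F t) * ((1 - α) * t + α * r) / α ∧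
      (1 - F t) * ((1 - α) * t + α * r) / α ≤ (1 - F t) * t / α := by
  have ht0 : 0 < t := lt_of_lt_of_le hr hrt
  have hFt : 0 ≤ 1 - F t := sub_nonneg.2 (hcdf.le_one t)
  constructor
  · -- main inequality
    set c : ℝ := 1 - α with hc
    have hc0 : 0 < c := by simp [hc]; linarith
    set β : ℝ := c⁻¹ with hβ
    have hβc : β * c = 1 := inv_mul_cancel₀ (ne_of_gt hc0)
    have hβ1 : 1 < β := by
      rw [hβ]
      rw [lt_inv_comm₀ one_pos hc0]
      simpa [hc] using by linarith
    set P : ℝ → ℝ := fun v => c * v + α * r with hP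
    have hPpos : ∀ v, t ≤ v → 0 < P v := by
      intro v hv
      have : 0 < v := lt_of_lt_of_le ht0 hv
      have : 0 < c * v := mul_pos hc0 this
      have : 0 < α * r := mul_pos hα0 hr
      simp only [hP]; positivity
    have hPd : ∀ v : ℝ, HasDerivAt P c v := by
      intro v
      simpa only [id, mul_one] using ((hasDerivAt_id v).const_mul c).add_const (α * r)
    -- key pointwise inequality : 1 - F v ≤ f v * P v for v ≥ r
    have key : ∀ v, r ≤ v → 1 - F v ≤ f v * P v := by
      intro v hv
      have hv0 : 0 ≤ v := le_trans hr.le hv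
      by_cases hFv : F v < 1
      · have hfv : 0 < f v := hcdf.f_pos v hv0 hFv
        have hdiv : (1 - F v) / f v ≤ P v := by
          rcases eq_or_lt_of_le hv with heq | hlt
          · have h1 : r - (1 - F r) / f r = 0 := hmon
            rw [← heq]
            simp only [hP, hc]
            linarith
          · have hsr := hSR r v hr.le hlt hFv
            rw [hmon] at hsr
            simp only [virtualValue, sub_zero] at hsr
            simp only [hP, hc]
            linarith
        have h2 := (div_le_iff₀ hfv).mp hdiv
        linarith [mul_comm (P v) (f v)]
      · have hFv1 : F v = 1 := le_antisymm (hcdf.le_one v) (not_lt.mp hFv)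
        have hf0 : 0 ≤ f v := f_nonneg_of_monotone hcdf.mono (hcdf.hasDeriv v hv0)
        have hPv : 0 < P v := by
          have h1 : 0 < c * v := mul_pos hc0 (lt_of_lt_of_le hr hv)
          have h2 : 0 < α * r := mul_pos hα0 hr
          simp only [hP]; linarith
        rw [hFv1]
        simp
        positivity
    -- H is antitone on Ici t
    set H : ℝ → ℝ := fun v => (1 - F v) * (P v) ^ β with hH
    have hHd : ∀ v, t ≤ v → HasDerivAt H
        (-(f v) * (P v) ^ β + (1 - F v) * (P v) ^ (β - 1)) v := by
      intro v hv
      have hPv := hPpos v hv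
      have hF' : HasDerivAt (fun w => 1 - F w) (-(f v)) v := by
        have h := (hasDerivAt_const v (1:ℝ)).sub (hcdf.hasDeriv v (le_trans ht0.le hv))
        rw [zero_sub] at h
        exact h
      have hpow : HasDerivAt (fun w => (P w) ^ β) ((P v) ^ (β - 1)) v := by
        have h1 : HasDerivAt (fun y : ℝ => y ^ β) (β * (P v) ^ (β - 1)) (P v) :=
          Real.hasDerivAt_rpow_const (Or.inl (ne_of_gt hPv))
        have h2 := h1.comp v (hPd v)
        have h3 : β * (P v) ^ (β - 1) * c = (P v) ^ (β - 1) := by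
          rw [mul_comm β _, mul_assoc, hβc, mul_one]
        rw [h3] at h2
        exact h2
      have := hF'.mul hpow
      exact this
    have hAnti : AntitoneOn H (Set.Ici t) := by
      apply antitoneOn_of_deriv_nonpos (convex_Ici t)
      · intro v hv
        exact (hHd v hv).continuousAt.continuousWithinAt
      · intro v hv
        rw [interior_Ici] at hv
        exact (hHd v (le_of_lt hv)).differentiableAt.differentiableWithinAt
      · intro v hv
        rw [interior_Ici] at hv
        rw [(hHd v (le_of_lt hv)).deriv]
        have hPv := hPpos v (le_of_lt hv)
        have hkey := key v (le_trans hrt (le_of_lt hv))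
        have hpow_pos : (0:ℝ) < (P v) ^ (β - 1) := rpow_pos_of_pos hPv _
        have : (P v) ^ β = (P v) ^ (β - 1) * P v := by
          rw [← Real.rpow_add_one (ne_of_gt hPv) (β - 1)]
          norm_num
        rw [this]
        nlinarith
    -- pointwise bound on Ioi t
    have hbound : ∀ v ∈ Set.Ioi t, 1 - F v ≤ H t * (P v) ^ (-β) := by
      intro v hv
      have hv' : t ≤ v := le_of_lt hv
      have hPv := hPpos v hv'
      have h1 : H v ≤ H t := hAnti (Set.self_mem_Ici) hv' hv'
      have h2 : 1 - F v = H v * (P v) ^ (-β) := by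
        rw [hH]
        rw [mul_assoc, ← Real.rpow_add hPv]
        simp
      rw [h2]
      exact mul_le_mul_of_nonneg_right h1 (rpow_nonneg hPv.le _)
    -- the comparison integral
    have hPt := hPpos t le_rfl
    have hgd : ∀ v ∈ Set.Ici t, HasDerivAt (fun w => -(P w) ^ (1 - β) / α) ((P v) ^ (-β)) v := by
      intro v hv
      have hPv := hPpos v hv
      have h1 : HasDerivAt (fun y : ℝ => y ^ (1 - β)) ((1 - β) * (P v) ^ (1 - β - 1)) (P v) :=
        Real.hasDerivAt_rpow_const (Or.inl (ne_of_gt hPv))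
      have h2 := (h1.comp v (hPd v)).neg.div_const α
      have h3 : (1 - β) * c = -α := by
        have hb : β * c = 1 := hβc
        simp only [hc] at hb ⊢
        nlinarith
      have h4 : -((1 - β) * (P v) ^ (1 - β - 1) * c) / α = (P v) ^ (-β) := by
        have h5 : (1:ℝ) - β - 1 = -β := by ring
        rw [h5, mul_comm ((1:ℝ) - β) _, mul_assoc, h3]
        field_simp
      rw [h4] at h2
      exact h2
    have hgtend : Tendsto (fun v => -(P v) ^ (1 - β) / α) atTop (nhds 0) := by
      have hPtop : Tendsto P atTop atTop := by
        apply Filter.tendsto_atTop_add_const_right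
        exact (tendsto_id.const_mul_atTop hc0)
      have h1 : Tendsto (fun y : ℝ => y ^ (1 - β)) atTop (nhds 0) := by
        have := tendsto_rpow_neg_atTop (y := β - 1) (by linarith)
        convert this using 2
        ring_nf
      have := (h1.comp hPtop).neg.div_const α
      simpa using this
    have hg'nonneg : ∀ v ∈ Set.Ioi t, 0 ≤ (P v) ^ (-β) := fun v hv =>
      (rpow_pos_of_pos (hPpos v (le_of_lt hv)) _).le
    have hint : IntegrableOn (fun v => (P v) ^ (-β)) (Set.Ioi t) :=
      integrableOn_Ioi_deriv_of_nonneg ((hgd t Set.self_mem_Ici).continuousAt.continuousWithinAt)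
        (fun v hv => hgd v (le_of_lt hv : t ≤ v)) hg'nonneg hgtend
    have hval : (∫ v in Set.Ioi t, (P v) ^ (-β)) = (P t) ^ (1 - β) / α := by
      rw [integral_Ioi_of_hasDerivAt_of_nonneg
        ((hgd t Set.self_mem_Ici).continuousAt.continuousWithinAt)
        (fun v hv => hgd v (le_of_lt hv : t ≤ v)) hg'nonneg hgtend]
      ring
    -- integrability of 1 - F on Ioi t
    have hFmeas : AEStronglyMeasurable (fun v => 1 - F v)
        (volume.restrict (Set.Ioi t)) := by
      exact (measurable_const.sub hcdf.mono.measurable).aestronglyMeasurable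
    have hintF : IntegrableOn (fun v => 1 - F v) (Set.Ioi t) := by
      apply Integrable.mono' (hint.const_mul (H t)) hFmeas
      rw [ae_restrict_iff' measurableSet_Ioi]
      apply ae_of_all
      intro v hv
      rw [Real.norm_eq_abs, abs_of_nonneg (sub_nonneg.2 (hcdf.le_one v))]
      exact hbound v hv
    -- combine
    calc (∫ v in Set.Ioi t, (1 - F v))
        ≤ ∫ v in Set.Ioi t, H t * (P v) ^ (-β) := by
          apply setIntegral_mono_on hintF (hint.const_mul (H t)) measurableSet_Ioi hbound
      _ = H t * ((P t) ^ (1 - β) / α) := by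
          rw [integral_const_mul, hval]
      _ = (1 - F t) * ((1 - α) * t + α * r) / α := by
          rw [hH]
          have : (P t) ^ β * ((P t) ^ (1 - β)) = P t := by
            rw [← Real.rpow_add hPt]
            simp
          field_simp
          rw [mul_assoc, this]
  · -- trivial inequality
    have h1 : (1 - α) * t + α * r ≤ t := by nlinarith
    have h2 : (1 - F t) * ((1 - α) * t + α * r) ≤ (1 - F t) * t :=
      mul_le_mul_of_nonneg_left h1 hFt
    exact div_le_div_of_nonneg_right h2 hα0.le
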